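/- Let A be a real d × d matrix and C a real q × d matrix. If the stacked matrix O(A,C) (with block rows C, CA, …, CA^{d−1}) does not have full rank d, then there exists a nonzero vector v ∈ ℝ^d such that ∫₀^t C e^{sA} v ds = 0 for all t ≥ 0. -/

import Mathlib

open MeasureTheory Matrix

attribute [local instance] Matrix.linftyOpNormedAddCommGroup Matrix.linftyOpNormedRing
  Matrix.linftyOpNormedAlgebra

/-- If the observability matrix `O(A,C)` (block rows
`C, CA, …, CA^{d-1}`) does not have full rank `d`, then there is a nonzero `v ∈ ℝ^d`
with `∫₀^t C e^{sA} v ds = 0` for all `t ≥ 0`. -/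
theorem stmt8 (d q : ℕ)
    (A : Matrix (Fin d) (Fin d) ℝ) (C : Matrix (Fin q) (Fin d) ℝ)
    (O : Matrix (Fin d × Fin q) (Fin d) ℝ)
    (hO : ∀ (i : Fin d) (j : Fin q) (l : Fin d), O (i, j) l = (C * A ^ (i : ℕ)) j l)
    (hrank : O.rank ≠ d) :
    ∃ v : Fin d → ℝ, v ≠ 0 ∧ ∀ t : ℝ, 0 ≤ t →
      ∫ s in (0:ℝ)..t, (C * NormedSpace.exp (s • A)).mulVec v = 0 := by
  -- Step 1: obtain a nonzero kernel vector
  obtain ⟨v, hv0, hv⟩ : ∃ v : Fin d → ℝ, v ≠ 0 ∧ O.mulVec v = 0 := by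
    have h1 : O.rank ≤ d := by simpa using O.rank_le_card_width
    have h2 := O.mulVecLin.finrank_range_add_finrank_ker
    simp [Module.finrank_pi] at h2
    have hker : Module.finrank ℝ (LinearMap.ker O.mulVecLin) ≠ 0 := by
      intro h0
      rw [h0] at h2
      exact hrank (by rw [Matrix.rank]; omega)
    have hne : LinearMap.ker O.mulVecLin ≠ ⊥ := by
      intro hbot; rw [hbot] at hker; simp at hker
    obtain ⟨w, hw, hw0⟩ := Submodule.exists_mem_ne_zero_of_ne_bot hne
    exact ⟨w, hw0, hw⟩
  refine ⟨v, hv0, ?_⟩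
  -- the linear map M ↦ C (M v)
  let L : Matrix (Fin d) (Fin d) ℝ →ₗ[ℝ] (Fin q → ℝ) :=
    { toFun := fun M => C.mulVec (M.mulVec v)
      map_add' := fun M N => by simp [Matrix.add_mulVec, Matrix.mulVec_add]
      map_smul' := fun c M => by simp [Matrix.smul_mulVec, Matrix.mulVec_smul] }
  have hLapp : ∀ M : Matrix (Fin d) (Fin d) ℝ, L M = C.mulVec (M.mulVec v) := fun _ => rfl
  -- Step 2: base case from O v = 0
  have hbase : ∀ i : Fin d, L (A ^ (i : ℕ)) = 0 := by
    intro i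
    have h1 : (C * A ^ (i : ℕ)).mulVec v = 0 := by
      funext j
      have h2 : O.mulVec v (i, j) = 0 := by rw [hv]; rfl
      simp only [Matrix.mulVec, dotProduct, Pi.zero_apply] at h2 ⊢
      rw [← h2]
      exact Finset.sum_congr rfl fun l _ => by rw [hO i j l]
    rw [hLapp, Matrix.mulVec_mulVec, h1]
  -- Step 3: all powers via Cayley–Hamilton
  have hall : ∀ n : ℕ, L (A ^ n) = 0 := by
    intro n
    induction n using Nat.strong_induction_on with
    | _ n ih =>
    by_cases hn : n < d
    · exact hbase ⟨n, hn⟩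
    · have hd : A.charpoly.natDegree = d := by
        simp [Matrix.charpoly_natDegree_eq_dim]
      have hCH := A.aeval_self_charpoly
      rw [Polynomial.aeval_eq_sum_range, hd] at hCH
      have hcd : A.charpoly.coeff d = 1 := by
        have := A.charpoly_monic
        rw [Polynomial.Monic, Polynomial.leadingCoeff, hd] at this
        exact this
      rw [Finset.sum_range_succ, hcd, one_smul] at hCH
      have hAd : A ^ d = -∑ i ∈ Finset.range d, A.charpoly.coeff i • A ^ i := by
        linear_combination (norm := module) hCH
      obtain ⟨m, rfl⟩ := Nat.exists_eq_add_of_le (Nat.not_lt.mp hn)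
      have hpow : A ^ (d + m) = -∑ i ∈ Finset.range d, A.charpoly.coeff i • A ^ (i + m) := by
        rw [pow_add, hAd, neg_mul, Finset.sum_mul]
        simp only [smul_mul_assoc, ← pow_add]
      rw [hpow, map_neg, map_sum, neg_eq_zero]
      refine Finset.sum_eq_zero fun i hi => ?_
      rw [L.map_smul, ih (i + m) (by have := Finset.mem_range.mp hi; omega), smul_zero]
  -- Step 4: the integrand vanishes
  have hint : ∀ s : ℝ, (C * NormedSpace.exp (s • A)).mulVec v = 0 := by
    intro s
    have h1 : (C * NormedSpace.exp (s • A)).mulVec v = L (NormedSpace.exp (s • A)) := by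
      rw [hLapp, Matrix.mulVec_mulVec]
    have hexp : NormedSpace.exp (s • A)
        = ∑' n : ℕ, ((n.factorial : ℝ))⁻¹ • (s • A) ^ n :=
      congrFun (NormedSpace.exp_eq_tsum ℝ) (s • A)
    have hsum : Summable fun n : ℕ => ((n.factorial : ℝ))⁻¹ • (s • A) ^ n :=
      NormedSpace.expSeries_summable' (𝕂 := ℝ) (s • A)
    have hmap := ContinuousLinearMap.map_tsum L.toContinuousLinearMap hsum
    simp only [ContinuousLinearMap.coe_coe, LinearMap.coe_toContinuousLinearMap'] at hmap
    rw [h1, hexp, hmap]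
    have hz : ∀ n : ℕ, L (((n.factorial : ℝ))⁻¹ • (s • A) ^ n) = 0 := by
      intro n
      rw [L.map_smul, smul_pow, L.map_smul, hall, smul_zero, smul_zero]
    simp only [hz, tsum_zero]
  intro t _
  simp only [hint]
  exact intervalIntegral.integral_zero
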